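/- Let T be a tree, w a vertex of T with components T_1, ..., T_s of T - w, and λ a real number. Suppose some component T_s is a path containing λ as an eigenvalue such that λ is not an eigenvalue of T_s - u_s, where u_s is the neighbor of w in T_s. Then m(T, λ) = m(T - w, λ) - 1 = (Σ_{i=1}^s m(T_i, λ)) - 1. -/

import Mathlib

open scoped Classical

/-- Multiplicity of `lam` as an eigenvalue of a real symmetric matrix:
dimension of the kernel of `A - lam • 1`. -/
noncomputable def matMult {V : Type*} [Fintype V] [DecidableEq V]
    (A : Matrix V V ℝ) (lam : ℝ) : ℕ :=
  Module.finrank ℝ (LinearMap.ker (Matrix.toLin' (A - lam • (1 : Matrix V V ℝ))))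

/-- Adjacency matrix of a simple graph over ℝ. -/
noncomputable def adjM {V : Type*} [Fintype V] (G : SimpleGraph V) : Matrix V V ℝ :=
  fun i j => if G.Adj i j then 1 else 0

/-- Multiplicity of `lam` as an eigenvalue of the adjacency matrix of `G`. -/
noncomputable def gMult {V : Type*} [Fintype V] (G : SimpleGraph V) (lam : ℝ) : ℕ :=
  matMult (adjM G) lam

/-- Multiplicity of `lam` as an eigenvalue of the induced subgraph of `G` on `s`. -/
noncomputable def sMult {V : Type*} [Fintype V] (G : SimpleGraph V) (s : Set V) (lam : ℝ) : ℕ :=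
  gMult (G.induce s) lam

/-- Degree of a vertex, via the cardinality of its neighbor set. -/
noncomputable def deg {V : Type*} (G : SimpleGraph V) (v : V) : ℕ :=
  (G.neighborSet v).ncard

/-- Number of pendant (degree-1) vertices. -/
noncomputable def pendCount {V : Type*} (G : SimpleGraph V) : ℕ :=
  {v : V | deg G v = 1}.ncard

/-- Number of pendant vertices, with the paper's convention that a
single-vertex graph has `p = 2`. -/
noncomputable def pendCount' {V : Type*} (G : SimpleGraph V) : ℕ :=
  if Nat.card V ≤ 1 then 2 else pendCount G

/-- A graph is (isomorphic to) a path graph. -/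
def IsPathGraph {W : Type*} (H : SimpleGraph W) : Prop :=
  ∃ n : ℕ, Nonempty (H ≃g SimpleGraph.pathGraph n)

/-- The vertex sets (as subsets of `V`) of the connected components of `G - w`. -/
def compSupp {V : Type*} (G : SimpleGraph V) (w : V)
    (c : (G.induce {u | u ≠ w}).ConnectedComponent) : Set V :=
  Subtype.val '' c.supp

open Module LinearMap

open Module LinearMap

example {V : Type*} (G : SimpleGraph V) (s : Set V) (a b : ↥s) :
    (G.induce s).Adj a b ↔ G.Adj ↑a ↑b := Iff.rfl

lemma mem_ker_iff {α : Type*} [Fintype α] [DecidableEq α] (A : Matrix α α ℝ) (lam : ℝ)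
    (x : α → ℝ) :
    x ∈ LinearMap.ker (Matrix.toLin' (A - lam • (1 : Matrix α α ℝ))) ↔
      ∀ i, ∑ j, A i j * x j = lam * x i := by
  rw [LinearMap.mem_ker, Matrix.toLin'_apply, funext_iff]
  refine forall_congr' fun i => ?_
  simp only [Matrix.mulVec, dotProduct, Matrix.sub_apply, Matrix.smul_apply,
    Matrix.one_apply, smul_eq_mul, mul_ite, mul_one, mul_zero, sub_mul, ite_mul, zero_mul,
    Finset.sum_sub_distrib, Finset.sum_ite_eq, Finset.mem_univ, if_true, Pi.zero_apply]
  rw [sub_eq_zero]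

/-- eigenvectors of the induced subgraph on `s`, extended by zero, as a submodule of `V → ℝ`. -/

noncomputable def EVS {V : Type*} [Fintype V] (T : SimpleGraph V) (s : Set V) (lam : ℝ) :
    Submodule ℝ (V → ℝ) where
  carrier := {y | (∀ v, v ∉ s → y v = 0) ∧ ∀ v ∈ s, ∑ v', adjM T v v' * y v' = lam * y v}
  add_mem' := by
    rintro a b ⟨ha0, ha⟩ ⟨hb0, hb⟩
    refine ⟨fun v hv => by simp [ha0 v hv, hb0 v hv], fun v hv => ?_⟩
    simp only [Pi.add_apply, mul_add]
    rw [Finset.sum_add_distrib, ha v hv, hb v hv]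
  zero_mem' := ⟨fun v _ => rfl, fun v _ => by simp⟩
  smul_mem' := by
    rintro r a ⟨ha0, ha⟩
    refine ⟨fun v hv => by simp [ha0 v hv], fun v hv => ?_⟩
    simp only [Pi.smul_apply, smul_eq_mul]
    rw [show ∀ g : V → ℝ, (∑ v', g v' * (r * a v')) = r * ∑ v', g v' * a v' from
      fun g => by rw [Finset.mul_sum]; exact Finset.sum_congr rfl fun _ _ => by ring,
      ha v hv]
    ring

lemma mem_EVS {V : Type*} [Fintype V] {T : SimpleGraph V} {s : Set V} {lam : ℝ} {y : V → ℝ} :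
    y ∈ EVS T s lam ↔
      (∀ v, v ∉ s → y v = 0) ∧ ∀ v ∈ s, ∑ v', adjM T v v' * y v' = lam * y v := Iff.rfl

lemma sum_ext_zero {V : Type*} [Fintype V] {s : Set V} (g : V → ℝ) (h : ∀ v ∉ s, g v = 0) :
    ∑ v : ↥s, g ↑v = ∑ v, g v := by
  rw [Finset.sum_set_coe]
  exact Finset.sum_subset (Finset.subset_univ _) (fun x _ hx => h x (by simpa using hx))

lemma adjM_induce {V : Type*} [Fintype V] (T : SimpleGraph V) (s : Set V) (a b : ↥s) :
    adjM (T.induce s) a b = adjM T ↑a ↑b := by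
  simp only [adjM]
  exact if_congr Iff.rfl rfl rfl

noncomputable def evsEquiv {V : Type*} [Fintype V] (T : SimpleGraph V) (s : Set V) (lam : ℝ)
    (inst : DecidableEq ↥s) :
    (LinearMap.ker ((@Matrix.toLin' ℝ _ ↥s ↥s inst _)
      (adjM (T.induce s) - lam • (1 : Matrix ↥s ↥s ℝ)))) ≃ₗ[ℝ] EVS T s lam :=
  letI := inst
  { 
  toFun := fun x => ⟨fun v => if h : v ∈ s then x.1 ⟨v, h⟩ else 0, by
    refine ⟨fun v hv => dif_neg hv, fun v hv => ?_⟩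
    have hx := (mem_ker_iff _ _ _).1 x.2 ⟨v, hv⟩
    show (∑ v', adjM T v v' * if h : v' ∈ s then x.1 ⟨v', h⟩ else 0) =
      lam * if h : v ∈ s then x.1 ⟨v, h⟩ else 0
    rw [← sum_ext_zero (fun v' => adjM T v v' * if h : v' ∈ s then x.1 ⟨v', h⟩ else 0)
      (fun v' hv' => by show adjM T v v' * dite _ _ _ = 0; rw [dif_neg hv', mul_zero]),
      dif_pos hv]
    rw [← hx]
    exact Finset.sum_congr rfl fun j _ => by rw [dif_pos j.2, adjM_induce, Subtype.coe_eta]⟩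
  map_add' := fun x y => by
    ext v
    by_cases h : v ∈ s <;> simp [h]
  map_smul' := fun r x => by
    ext v
    by_cases h : v ∈ s <;> simp [h]
  invFun := fun y => ⟨fun v => y.1 ↑v, by
    rw [mem_ker_iff]
    intro i
    have hy := y.2.2 ↑i i.2
    rw [← sum_ext_zero (fun v' => adjM T ↑i v' * y.1 v') (fun v' hv' => by
      show adjM T ↑i v' * y.1 v' = 0; rw [y.2.1 v' hv', mul_zero])] at hy
    rw [← hy]
    exact Finset.sum_congr rfl fun j _ => by rw [adjM_induce]⟩
  left_inv := fun x => by
    ext j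
    exact dif_pos j.2
  right_inv := fun y => by
    ext v
    by_cases h : v ∈ s
    · exact dif_pos h
    · exact (dif_neg h).trans (y.2.1 v h).symm }

lemma sMult_eq_finrank {V : Type*} [Fintype V] (T : SimpleGraph V) (s : Set V) (lam : ℝ) :
    sMult T s lam = Module.finrank ℝ (EVS T s lam) := by
  unfold sMult gMult matMult
  exact LinearEquiv.finrank_eq (evsEquiv T s lam _)

noncomputable def evsEquivUniv {V : Type*} [Fintype V] (T : SimpleGraph V) (lam : ℝ)
    (inst : DecidableEq V) :
    (LinearMap.ker ((@Matrix.toLin' ℝ _ V V inst _)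
      (adjM T - lam • (1 : Matrix V V ℝ)))) ≃ₗ[ℝ] EVS T Set.univ lam :=
  letI := inst
  { 
  toFun := fun x => ⟨x.1, by
    refine ⟨fun v hv => absurd (Set.mem_univ v) hv, fun v _ => (mem_ker_iff _ _ _).1 x.2 v⟩⟩
  map_add' := fun x y => rfl
  map_smul' := fun r x => rfl
  invFun := fun y => ⟨y.1, by
    rw [mem_ker_iff]
    exact fun i => y.2.2 i (Set.mem_univ i)⟩
  left_inv := fun x => rfl
  right_inv := fun y => rfl }

lemma gMult_eq_finrank {V : Type*} [Fintype V] (T : SimpleGraph V) (lam : ℝ) :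
    gMult T lam = Module.finrank ℝ (EVS T Set.univ lam) := by
  unfold gMult matMult
  exact LinearEquiv.finrank_eq (evsEquivUniv T lam _)

lemma mem_compSupp {V : Type*} {G : SimpleGraph V} {w : V}
    {c : (G.induce {u | u ≠ w}).ConnectedComponent} {v : V} :
    v ∈ compSupp G w c ↔ ∃ h : v ≠ w,
      (G.induce {u | u ≠ w}).connectedComponentMk ⟨v, h⟩ = c := by
  constructor
  · rintro ⟨⟨x, hx⟩, hxc, rfl⟩
    exact ⟨hx, hxc⟩
  · rintro ⟨h, hh⟩
    exact ⟨⟨v, h⟩, hh, rfl⟩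

lemma compSupp_ne {V : Type*} {G : SimpleGraph V} {w : V}
    {c : (G.induce {u | u ≠ w}).ConnectedComponent} {v : V} (h : v ∈ compSupp G w c) :
    v ≠ w := (mem_compSupp.1 h).1

lemma mem_compSupp_self {V : Type*} {G : SimpleGraph V} {w : V} {v : V} (h : v ≠ w) :
    v ∈ compSupp G w ((G.induce {u | u ≠ w}).connectedComponentMk ⟨v, h⟩) :=
  mem_compSupp.2 ⟨h, rfl⟩

lemma compSupp_unique {V : Type*} {G : SimpleGraph V} {w : V}
    {c c' : (G.induce {u | u ≠ w}).ConnectedComponent} {v : V}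
    (h : v ∈ compSupp G w c) (h' : v ∈ compSupp G w c') : c = c' := by
  obtain ⟨hv, hc⟩ := mem_compSupp.1 h
  obtain ⟨hv', hc'⟩ := mem_compSupp.1 h'
  exact hc ▸ hc' ▸ rfl

lemma adj_same_comp {V : Type*} {G : SimpleGraph V} {w : V} {v v' : V}
    (hv : v ≠ w) (hv' : v' ≠ w) (hadj : G.Adj v v') :
    (G.induce {u | u ≠ w}).connectedComponentMk ⟨v, hv⟩ =
      (G.induce {u | u ≠ w}).connectedComponentMk ⟨v', hv'⟩ :=
  SimpleGraph.ConnectedComponent.sound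
    (SimpleGraph.Adj.reachable (show (G.induce {u | u ≠ w}).Adj ⟨v, hv⟩ ⟨v', hv'⟩ from hadj))

lemma adjM_cross_zero {V : Type*} [Fintype V] {T : SimpleGraph V} {w : V}
    {c : (T.induce {u | u ≠ w}).ConnectedComponent} {v v' : V}
    (hv : v ∈ compSupp T w c) (hv'w : v' ≠ w) (hv' : v' ∉ compSupp T w c) :
    adjM T v v' = 0 := by
  obtain ⟨hvw, hvc⟩ := mem_compSupp.1 hv
  rw [adjM, if_neg]
  intro hadj
  exact hv' (mem_compSupp.2 ⟨hv'w, (adj_same_comp hv'w hvw hadj.symm).trans hvc⟩)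

lemma restrict_mem_EVS {V : Type*} [Fintype V] {T : SimpleGraph V} {w : V} {lam : ℝ}
    {c : (T.induce {u | u ≠ w}).ConnectedComponent} {y : V → ℝ}
    (hy : y ∈ EVS T {u | u ≠ w} lam) :
    (fun v => if v ∈ compSupp T w c then y v else 0) ∈ EVS T (compSupp T w c) lam := by
  refine ⟨fun v hv => if_neg hv, fun v hv => ?_⟩
  have hvW : v ≠ w := compSupp_ne hv
  have key : (∑ v', adjM T v v' * if v' ∈ compSupp T w c then y v' else 0)
      = ∑ v', adjM T v v' * y v' := by
    refine Finset.sum_congr rfl fun v' _ => ?_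
    by_cases h : v' ∈ compSupp T w c
    · rw [if_pos h]
    · rw [if_neg h]
      by_cases hw' : v' = w
      · simp [hy.1 v' (by simp [hw'])]
      · simp [adjM_cross_zero hv hw' h]
  show (∑ v', adjM T v v' * if v' ∈ compSupp T w c then y v' else 0)
    = lam * if v ∈ compSupp T w c then y v else 0
  rw [key, hy.2 v hvW, if_pos hv]

noncomputable def evsDecomp {V : Type*} [Fintype V] (T : SimpleGraph V) (w : V) (lam : ℝ)
    [Fintype ((T.induce {u | u ≠ w}).ConnectedComponent)] :
    EVS T {u | u ≠ w} lam ≃ₗ[ℝ]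
      Π c : (T.induce {u | u ≠ w}).ConnectedComponent, EVS T (compSupp T w c) lam where
  toFun := fun y c => ⟨fun v => if v ∈ compSupp T w c then y.1 v else 0, restrict_mem_EVS y.2⟩
  map_add' := fun x y => by
    ext c v
    by_cases h : v ∈ compSupp T w c <;> simp [h]
  map_smul' := fun r x => by
    ext c v
    by_cases h : v ∈ compSupp T w c <;> simp [h]
  invFun := fun f => ⟨fun v => ∑ c, (f c).1 v, by
    constructor
    · intro v hv
      have hv' : v = w := not_not.1 hv
      exact Finset.sum_eq_zero fun c _ => (f c).2.1 v (fun hvc => compSupp_ne hvc hv')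
    · intro v hv
      have hvw : v ≠ w := hv
      show (∑ v', adjM T v v' * ∑ c, (f c).1 v') = lam * ∑ c, (f c).1 v
      set c₀ := (T.induce {u | u ≠ w}).connectedComponentMk ⟨v, hvw⟩ with hc₀
      have hvc₀ : v ∈ compSupp T w c₀ := mem_compSupp_self hvw
      have hsingle : (∑ c, (f c).1 v) = (f c₀).1 v := by
        refine Finset.sum_eq_single c₀ (fun c _ hc => (f c).2.1 v fun hvc =>
          hc (compSupp_unique hvc hvc₀)) (fun h => absurd (Finset.mem_univ c₀) h)
      have hswap : (∑ v', adjM T v v' * ∑ c, (f c).1 v')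
          = ∑ c, ∑ v', adjM T v v' * (f c).1 v' := by
        rw [Finset.sum_comm]
        exact Finset.sum_congr rfl fun v' _ => Finset.mul_sum _ _ _
      rw [hswap, hsingle]
      rw [Finset.sum_eq_single c₀ (fun c _ hc => Finset.sum_eq_zero fun v' _ => ?_)
        (fun h => absurd (Finset.mem_univ c₀) h)]
      · exact (f c₀).2.2 v hvc₀
      · by_cases hz : (f c).1 v' = 0
        · rw [hz, mul_zero]
        · have hv'c : v' ∈ compSupp T w c := by
            by_contra hcon
            exact hz ((f c).2.1 v' hcon)
          have hv'w : v' ≠ w := compSupp_ne hv'c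
          have hv'nc₀ : v' ∉ compSupp T w c₀ := fun hmem => hc (compSupp_unique hv'c hmem)
          rw [adjM_cross_zero hvc₀ hv'w hv'nc₀, zero_mul]⟩
  left_inv := fun y => by
    ext v
    show (∑ c, if v ∈ compSupp T w c then y.1 v else 0) = y.1 v
    by_cases hvw : v = w
    · rw [Finset.sum_eq_zero fun c _ => if_neg (fun hvc => compSupp_ne hvc hvw),
        y.2.1 v (not_not.2 hvw)]
    · have hvc₀ : v ∈ compSupp T w ((T.induce {u | u ≠ w}).connectedComponentMk ⟨v, hvw⟩) :=
        mem_compSupp_self hvw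
      rw [Finset.sum_eq_single _ (fun c _ hc => if_neg fun hvc =>
        hc (compSupp_unique hvc hvc₀)) (fun h => absurd (Finset.mem_univ _) h), if_pos hvc₀]
  right_inv := fun f => by
    ext c v
    show (if v ∈ compSupp T w c then ∑ c', (f c').1 v else 0) = (f c).1 v
    by_cases h : v ∈ compSupp T w c
    · rw [if_pos h, Finset.sum_eq_single c (fun c' _ hc' => (f c').2.1 v fun hvc =>
        hc' (compSupp_unique hvc h)) (fun hh => absurd (Finset.mem_univ c) hh)]
    · rw [if_neg h, ((f c).2.1 v h).symm]

lemma EVS_comp_decomp {V : Type*} [Fintype V] (T : SimpleGraph V) (w : V) (lam : ℝ) :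
    Module.finrank ℝ (EVS T {u | u ≠ w} lam) =
      ∑ᶠ c : (T.induce {u | u ≠ w}).ConnectedComponent,
        Module.finrank ℝ (EVS T (compSupp T w c) lam) := by
  haveI : Fintype ((T.induce {u | u ≠ w}).ConnectedComponent) := Fintype.ofFinite _
  rw [finsum_eq_sum_of_fintype, LinearEquiv.finrank_eq (evsDecomp T w lam),
    Module.finrank_pi_fintype]

/-- In a tree, `w` has at most one neighbor in each component of `T - w`. -/

lemma unique_neighbor {V : Type*} {T : SimpleGraph V} (hT : T.IsTree) {w : V}
    {c : (T.induce {u | u ≠ w}).ConnectedComponent} {a b : V}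
    (ha : a ∈ compSupp T w c) (hb : b ∈ compSupp T w c)
    (haw : T.Adj w a) (hbw : T.Adj w b) : a = b := by
  classical
  by_contra hne
  obtain ⟨ha', hac⟩ := mem_compSupp.1 ha
  obtain ⟨hb', hbc⟩ := mem_compSupp.1 hb
  have hreach : (T.induce {u | u ≠ w}).Reachable ⟨a, ha'⟩ ⟨b, hb'⟩ :=
    SimpleGraph.ConnectedComponent.exact (hac.trans hbc.symm)
  obtain ⟨q⟩ := hreach
  -- map the walk into T
  let q' : T.Walk a b := q.map (SimpleGraph.Embedding.induce {u | u ≠ w}).toHom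
  have hwq : w ∉ q'.support := by
    intro hw
    rw [show q'.support = _ from SimpleGraph.Walk.support_map _ _, List.mem_map] at hw
    obtain ⟨x, -, hx⟩ := hw
    exact x.2 hx
  let p : T.Path a b := q'.toPath
  have hwp : w ∉ p.1.support := fun hw => hwq (q'.support_toPath_subset hw)
  have hP2 : (SimpleGraph.Walk.cons haw p.1).IsPath := p.2.cons hwp
  have := SimpleGraph.isAcyclic_iff_path_unique.1 hT.IsAcyclic
    (SimpleGraph.Path.singleton hbw) ⟨SimpleGraph.Walk.cons haw p.1, hP2⟩
  have hsupp := congrArg (fun P : T.Path w b => P.1.support) this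
  simp only [SimpleGraph.Path.singleton, SimpleGraph.Walk.support_cons,
    SimpleGraph.Walk.support_nil] at hsupp
  rw [p.1.support_eq_cons] at hsupp
  apply hne
  injection hsupp with h1 h2
  injection h2 with h3 _
  exact h3.symm

lemma adjM_symm {V : Type*} [Fintype V] (T : SimpleGraph V) (a b : V) :
    adjM T a b = adjM T b a := by
  simp only [adjM, SimpleGraph.adj_comm]

lemma rowsum_z {V : Type*} [Fintype V] {T : SimpleGraph V} {w : V} {lam : ℝ}
    {c : (T.induce {u | u ≠ w}).ConnectedComponent} (hT : T.IsTree) {u : V}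
    (huc : u ∈ compSupp T w c) (hadjwu : T.Adj w u) {z : V → ℝ}
    (hz : z ∈ EVS T (compSupp T w c) lam) (v' : V) :
    ∑ v, adjM T v' v * z v = lam * z v' + (if v' = w then z u else 0) := by
  by_cases hS : v' ∈ compSupp T w c
  · rw [if_neg (compSupp_ne hS), add_zero]
    exact hz.2 v' hS
  · by_cases hw : v' = w
    · rw [if_pos hw, hz.1 v' (fun h => compSupp_ne h hw), mul_zero, zero_add]
      rw [Finset.sum_eq_single u (fun v _ hvu => ?_) (fun h => absurd (Finset.mem_univ u) h)]
      · rw [hw, adjM, if_pos hadjwu, one_mul]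
      · by_cases hzv : z v = 0
        · rw [hzv, mul_zero]
        · have hvS : v ∈ compSupp T w c := by
            by_contra hcon; exact hzv (hz.1 v hcon)
          have hA : adjM T v' v = 0 := by
            rw [adjM, if_neg]
            intro hadj
            exact hvu (unique_neighbor hT hvS huc (hw ▸ hadj) hadjwu)
          rw [hA, zero_mul]
    · rw [if_neg hw, hz.1 v' hS, mul_zero, add_zero]
      refine Finset.sum_eq_zero fun v _ => ?_
      by_cases hzv : z v = 0
      · rw [hzv, mul_zero]
      · have hvS : v ∈ compSupp T w c := by
          by_contra hcon; exact hzv (hz.1 v hcon)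
        rw [adjM_symm, adjM_cross_zero hvS hw hS, zero_mul]

lemma eval_w_zero {V : Type*} [Fintype V] {T : SimpleGraph V} {w : V} {lam : ℝ}
    {c : (T.induce {u | u ≠ w}).ConnectedComponent} (hT : T.IsTree) {u : V}
    (huc : u ∈ compSupp T w c) (hadjwu : T.Adj w u) {z : V → ℝ}
    (hz : z ∈ EVS T (compSupp T w c) lam) (hzu : z u ≠ 0)
    {y : V → ℝ} (hy : y ∈ EVS T Set.univ lam) : y w = 0 := by
  have key : ∑ v, z v * (lam * y v)
      = ∑ v', (lam * z v' + (if v' = w then z u else 0)) * y v' := by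
    calc ∑ v, z v * (lam * y v) = ∑ v, z v * ∑ v', adjM T v v' * y v' := by
          exact Finset.sum_congr rfl fun v _ => by rw [hy.2 v (Set.mem_univ v)]
      _ = ∑ v, ∑ v', z v * (adjM T v v' * y v') := by
          exact Finset.sum_congr rfl fun v _ => Finset.mul_sum _ _ _
      _ = ∑ v', ∑ v, z v * (adjM T v v' * y v') := Finset.sum_comm
      _ = ∑ v', (∑ v, adjM T v' v * z v) * y v' := by
          refine Finset.sum_congr rfl fun v' _ => ?_
          rw [Finset.sum_mul]
          exact Finset.sum_congr rfl fun v _ => by rw [adjM_symm T v' v]; ring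
      _ = ∑ v', (lam * z v' + (if v' = w then z u else 0)) * y v' := by
          exact Finset.sum_congr rfl fun v' _ => by rw [rowsum_z hT huc hadjwu hz v']
  have expand : ∑ v', (lam * z v' + (if v' = w then z u else 0)) * y v'
      = (∑ v', z v' * (lam * y v')) + z u * y w := by
    have h1 : ∀ v' : V, (lam * z v' + (if v' = w then z u else 0)) * y v'
        = z v' * (lam * y v') + (if v' = w then z u * y v' else 0) := by
      intro v'
      by_cases h : v' = w <;> simp [h] <;> ring
    rw [Finset.sum_congr rfl fun v' _ => h1 v', Finset.sum_add_distrib,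
      Finset.sum_ite_eq' Finset.univ w (fun v' => z u * y v')]
    simp
  have hzy : z u * y w = 0 := by
    have h2 := key.trans expand
    linarith
  rcases mul_eq_zero.1 hzy with h | h
  · exact absurd h hzu
  · exact h

set_option maxHeartbeats 1000000 in
set_option synthInstance.maxHeartbeats 1000000 in
/-- Key application of Johnson's lemma: if some component of `T - w` is a path
containing `lam`, whose path minus the neighbor of `w` avoids `lam`, then
`m(T, lam) = m(T - w, lam) - 1 = (Σᵢ m(Tᵢ, lam)) - 1`. -/
theorem stmt12 {V : Type*} [Fintype V] (T : SimpleGraph V) (hT : T.IsTree)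
    (w : V) (lam : ℝ)
    (hc : ∃ c : (T.induce {u | u ≠ w}).ConnectedComponent,
      IsPathGraph (T.induce (compSupp T w c)) ∧
      1 ≤ sMult T (compSupp T w c) lam ∧
      ∃ u ∈ compSupp T w c, T.Adj w u ∧ sMult T (compSupp T w c \ {u}) lam = 0) :
    gMult T lam + 1 = sMult T {u | u ≠ w} lam ∧
    sMult T {u | u ≠ w} lam =
      ∑ᶠ c : (T.induce {u | u ≠ w}).ConnectedComponent,
        sMult T (compSupp T w c) lam := by
  obtain ⟨c, -, hm, u, huc, hadjwu, hzero⟩ := hc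
  rw [sMult_eq_finrank] at hm hzero
  have hne : EVS T (compSupp T w c) lam ≠ ⊥ := by
    intro hbot
    rw [hbot, finrank_bot] at hm
    exact absurd hm (by norm_num)
  obtain ⟨z, hz, hz0⟩ := (Submodule.ne_bot_iff _).1 hne
  have hbotd : EVS T (compSupp T w c \ {u}) lam = ⊥ := Submodule.finrank_eq_zero.1 hzero
  have hzu : z u ≠ 0 := by
    intro h0
    apply hz0
    have hmem : z ∈ EVS T (compSupp T w c \ {u}) lam := by
      refine ⟨fun v hv => ?_, fun v hv => hz.2 v hv.1⟩
      by_cases hvu : v = u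
      · rw [hvu]; exact h0
      · exact hz.1 v (fun hvS => hv ⟨hvS, hvu⟩)
    rw [hbotd, Submodule.mem_bot] at hmem
    exact hmem
  have hwS : w ∉ compSupp T w c := fun h => compSupp_ne h rfl
  have hzW : z ∈ EVS T {u' | u' ≠ w} lam := by
    refine ⟨fun v hv => hz.1 v fun hvS => hv (compSupp_ne hvS), fun v hv => ?_⟩
    by_cases hvS : v ∈ compSupp T w c
    · exact hz.2 v hvS
    · have hrow := rowsum_z hT huc hadjwu hz v
      rw [if_neg hv, add_zero] at hrow
      rw [hrow, hz.1 v hvS]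
  let φ : EVS T {u' | u' ≠ w} lam →ₗ[ℝ] ℝ := {
    toFun := fun y => ∑ v, adjM T w v * y.1 v
    map_add' := fun a b => by
      simp only [Submodule.coe_add, Pi.add_apply, mul_add]
      exact Finset.sum_add_distrib
    map_smul' := fun r a => by
      simp only [Submodule.coe_smul, Pi.smul_apply, smul_eq_mul, RingHom.id_apply]
      rw [Finset.mul_sum]
      exact Finset.sum_congr rfl fun v _ => by ring }
  have hφz : φ ⟨z, hzW⟩ = z u := by
    have h := rowsum_z hT huc hadjwu hz w
    rw [if_pos rfl, hz.1 w hwS, mul_zero, zero_add] at h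
    exact h
  have hrange : LinearMap.range φ = ⊤ := by
    rw [eq_top_iff]
    rintro r -
    refine ⟨(r / z u) • ⟨z, hzW⟩, ?_⟩
    rw [map_smul, hφz, smul_eq_mul, div_mul_cancel₀ r hzu]
  have hker : EVS T Set.univ lam
      = (LinearMap.ker φ).map (EVS T {u' | u' ≠ w} lam).subtype := by
    ext y
    constructor
    · intro hy
      have hyw : y w = 0 := eval_w_zero hT huc hadjwu hz hzu hy
      have hyW : y ∈ EVS T {u' | u' ≠ w} lam :=
        ⟨fun v hv => by rw [show v = w from not_not.1 hv]; exact hyw,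
         fun v _ => hy.2 v (Set.mem_univ v)⟩
      refine ⟨⟨y, hyW⟩, ?_, rfl⟩
      show (∑ v, adjM T w v * y v) = 0
      rw [hy.2 w (Set.mem_univ w), hyw, mul_zero]
    · rintro ⟨x, hx, rfl⟩
      replace hx : (∑ v, adjM T w v * x.1 v) = 0 := hx
      refine ⟨fun v hv => absurd (Set.mem_univ v) hv, fun v _ => ?_⟩
      by_cases hvw : v = w
      · subst hvw
        have h1 : x.1 v = 0 := x.2.1 v (fun h => h rfl)
        show (∑ v', adjM T v v' * x.1 v') = lam * x.1 v
        rw [h1, mul_zero]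
        exact hx
      · exact x.2.2 v hvw
  have e1 : gMult T lam = Module.finrank ℝ (LinearMap.ker φ) := by
    rw [gMult_eq_finrank, hker]
    exact (LinearEquiv.finrank_eq (Submodule.equivMapOfInjective _
      (Submodule.injective_subtype _) (LinearMap.ker φ))).symm
  have e2 := LinearMap.finrank_range_add_finrank_ker φ
  rw [hrange, finrank_top, Module.finrank_self] at e2
  constructor
  · rw [e1, sMult_eq_finrank]
    omega
  · rw [sMult_eq_finrank, EVS_comp_decomp]
    exact finsum_congr fun c' => (sMult_eq_finrank T _ lam).symm
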